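/- arXiv:1312.7406 — 2 statements merged into one kernel-verified Lean document; each statement's English description precedes it below -/
import Mathlib

section
/- Let D be a τ-atomic integral domain with τ symmetric and associate preserving. If G_τ(x) is connected for every x ∈ D^#, then D is a τ-UFD. (Consequently, connectedness of all G_τ(x) is equivalent to all G_τ(x) being pseudocliques.) -/
/-- `a` is a nonzero nonunit, i.e. an element of `D^#`. -/
def NzNonunit {D : Type*} [CommRing D] (a : D) : Prop := a ≠ 0 ∧ ¬ IsUnit a

/-- `l` is the list of factors of a `τ`-factorization of `a`:
`a = λ * l.prod` for a unit `λ`, the factors are nonzero nonunits and pairwise `τ`-related. -/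
def TauFact {D : Type*} [CommRing D] (τ : D → D → Prop) (l : List D) (a : D) : Prop :=
  l ≠ [] ∧ (∀ b ∈ l, NzNonunit b) ∧ l.Pairwise τ ∧ ∃ u : Dˣ, a = (u : D) * l.prod

/-- `b` τ-divides `a`: `b` occurs as a factor in some τ-factorization of `a`. -/
def TauDvd {D : Type*} [CommRing D] (τ : D → D → Prop) (b a : D) : Prop :=
  ∃ l, TauFact τ l a ∧ b ∈ l

/-- `a` is τ-irreducible (a τ-atom): all its τ-factorizations are trivial. -/
def TauIrred {D : Type*} [CommRing D] (τ : D → D → Prop) (a : D) : Prop :=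
  NzNonunit a ∧ ∀ l, TauFact τ l a → l.length = 1

/-- `l` is a τ-atomic factorization of `a`. -/
def TauAtomicFact {D : Type*} [CommRing D] (τ : D → D → Prop) (l : List D) (a : D) : Prop :=
  TauFact τ l a ∧ ∀ b ∈ l, TauIrred τ b

/-- `D` is τ-atomic: every nonzero nonunit has a τ-atomic factorization. -/
def TauAtomic {D : Type*} [CommRing D] (τ : D → D → Prop) : Prop :=
  ∀ a : D, NzNonunit a → ∃ l, TauAtomicFact τ l a

def TauSymm {D : Type*} [CommRing D] (τ : D → D → Prop) : Prop :=
  ∀ a b, τ a b → τ b a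

/-- τ is associate preserving. -/
def TauAssocPres {D : Type*} [CommRing D] (τ : D → D → Prop) : Prop :=
  ∀ a b b' : D, τ a b → Associated b b' → τ a b'

/-- τ is refinable: replacing each factor of a τ-factorization by a
τ-factorization of it again yields a τ-factorization. -/
def TauRefinable {D : Type*} [CommRing D] (τ : D → D → Prop) : Prop :=
  ∀ (a : D) (l : List D) (F : List (List D)),
    TauFact τ l a → List.Forall₂ (fun b m => TauFact τ m b) l F →
    TauFact τ F.flatten a

/-- `a` is a vertex of the τ-irreducible divisor graph `G_τ(x)`. -/
def GVert {D : Type*} [CommRing D] (τ : D → D → Prop) (x a : D) : Prop :=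
  TauIrred τ a ∧ TauDvd τ a x

/-- `a` and `b` are adjacent (distinct, i.e. non-associated, vertices joined by an edge)
in `G_τ(x)`: some τ-factorization of `x` contains associates of both. -/
def GAdj {D : Type*} [CommRing D] (τ : D → D → Prop) (x a b : D) : Prop :=
  GVert τ x a ∧ GVert τ x b ∧ ¬ Associated a b ∧
  ∃ l, TauFact τ l x ∧ (∃ a' ∈ l, Associated a a') ∧ (∃ b' ∈ l, Associated b b')

/-- `G_τ(x)` is connected (vertices are taken up to associates). -/
def GConnected {D : Type*} [CommRing D] (τ : D → D → Prop) (x : D) : Prop :=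
  ∀ a b, GVert τ x a → GVert τ x b →
    Relation.ReflTransGen (fun u v => GAdj τ x u v ∨ Associated u v) a b

/-- The reduced graph `G̅_τ(x)` (loops deleted) is connected; loops do not affect
connectivity, so this is connectivity with respect to the same adjacency relation. -/
def GBarConnected {D : Type*} [CommRing D] (τ : D → D → Prop) (x : D) : Prop :=
  ∀ a b, GVert τ x a → GVert τ x b →
    Relation.ReflTransGen (fun u v => GAdj τ x u v ∨ Associated u v) a b

/-- `G_τ(x)` is a pseudoclique: any two non-associated vertices are adjacent.
(Equivalently, the reduced graph `G̅_τ(x)` is a clique / complete graph.) -/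
def GPseudoclique {D : Type*} [CommRing D] (τ : D → D → Prop) (x : D) : Prop :=
  ∀ a b, GVert τ x a → GVert τ x b → ¬ Associated a b → GAdj τ x a b

/-- `Diam(G_τ(x)) ≤ 1`: any two vertices are equal (associated) or adjacent. -/
def GDiamLeOne {D : Type*} [CommRing D] (τ : D → D → Prop) (x : D) : Prop :=
  ∀ a b, GVert τ x a → GVert τ x b → Associated a b ∨ GAdj τ x a b

/-- `G_τ(x)` has finitely many vertices (up to associates). -/
def GVertFinite {D : Type*} [CommRing D] (τ : D → D → Prop) (x : D) : Prop :=
  ∃ s : Finset D, ∀ a, GVert τ x a → ∃ c ∈ s, Associated a c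

/-- The vertex `a` of `G_τ(x)` has finite degree: finitely many adjacent vertices
up to associates (loops not counted). -/
def GDegFinite {D : Type*} [CommRing D] (τ : D → D → Prop) (x a : D) : Prop :=
  ∃ s : Finset D, ∀ b, GAdj τ x a b → ∃ c ∈ s, Associated b c

/-- The vertex `a` of `G_τ(x)` carries finitely many loops: there is a uniform bound on
the number of occurrences of associates of `a` in τ-atomic factorizations of `x`. -/
def GLoopsFinite {D : Type*} [CommRing D] (τ : D → D → Prop) (x a : D) : Prop :=
  ∃ N : ℕ, ∀ l m : List D, TauAtomicFact τ l x → m.Sublist l →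
    (∀ b ∈ m, Associated a b) → m.length ≤ N

/-- `D` satisfies τ-ACCP. -/
def TauACCP {D : Type*} [CommRing D] (τ : D → D → Prop) : Prop :=
  ∀ a : ℕ → D, (∀ i, TauDvd τ (a (i + 1)) (a i)) →
    ∃ N, ∀ i, N ≤ i → Associated (a i) (a N)

/-- `D` is a τ-UFD. -/
def TauUFD {D : Type*} [CommRing D] (τ : D → D → Prop) : Prop :=
  TauAtomic τ ∧ ∀ (x : D) (l₁ l₂ : List D), TauAtomicFact τ l₁ x → TauAtomicFact τ l₂ x →
    Multiset.Rel Associated (l₁ : Multiset D) (l₂ : Multiset D)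

/-- `D` is a τ-FFD: each nonzero nonunit has only finitely many τ-factorizations
up to rearrangement and associates. -/
def TauFFD {D : Type*} [CommRing D] (τ : D → D → Prop) : Prop :=
  ∀ x : D, NzNonunit x → ∃ S : Finset (Multiset D),
    ∀ l : List D, TauFact τ l x → ∃ m ∈ S, Multiset.Rel Associated (l : Multiset D) m

/-- `D` is a τ-WFFD: each nonzero nonunit has finitely many τ-divisors up to associates. -/
def TauWFFD {D : Type*} [CommRing D] (τ : D → D → Prop) : Prop :=
  ∀ x : D, NzNonunit x → ∃ s : Finset D,
    ∀ b, TauDvd τ b x → ∃ c ∈ s, Associated b c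

/-- `D` is a τ-idf domain: each nonzero nonunit has finitely many τ-irreducible
τ-divisors up to associates. -/
def TauIdf {D : Type*} [CommRing D] (τ : D → D → Prop) : Prop :=
  ∀ x : D, NzNonunit x → ∃ s : Finset D,
    ∀ b, TauIrred τ b → TauDvd τ b x → ∃ c ∈ s, Associated b c


section Aux

variable {D : Type*} [CommRing D] [IsDomain D] {τ : D → D → Prop}

lemma nzn_prod {l : List D} (h0 : l ≠ []) (hb : ∀ b ∈ l, NzNonunit b) :
    NzNonunit l.prod := by
  constructor
  · rw [Ne, List.prod_eq_zero_iff]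
    intro h; exact (hb 0 h).1 rfl
  · match l, h0 with
    | c :: t, _ =>
      rw [List.prod_cons]
      intro hu
      exact (hb c (List.mem_cons_self)).2 (isUnit_of_mul_isUnit_left hu)

lemma TauFact.nzn {l : List D} {a : D} (h : TauFact τ l a) : NzNonunit a := by
  obtain ⟨h0, hb, _, u, hu⟩ := h
  subst hu
  have hp := nzn_prod h0 hb
  exact ⟨mul_ne_zero (Units.ne_zero u) hp.1,
    fun hu => hp.2 (isUnit_of_mul_isUnit_right hu)⟩

lemma TauFact.of_assoc {l : List D} {a a' : D} (h : TauFact τ l a)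
    (ha : Associated a a') : TauFact τ l a' := by
  obtain ⟨h0, hb, hp, u, hu⟩ := h
  obtain ⟨v, hv⟩ := ha
  exact ⟨h0, hb, hp, v * u, by rw [← hv, hu]; push_cast; ring⟩

lemma TauIrred.of_assoc {a a' : D} (h : TauIrred τ a) (ha : Associated a a') :
    TauIrred τ a' := by
  refine ⟨?_, fun l hl => h.2 l (hl.of_assoc ha.symm)⟩
  obtain ⟨v, hv⟩ := ha
  subst hv
  exact ⟨mul_ne_zero h.1.1 (Units.ne_zero v),
    fun hu => h.1.2 (isUnit_of_mul_isUnit_left hu)⟩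

lemma assoc_of_single {x a : D} (h : TauFact τ [a] x) : Associated x a := by
  obtain ⟨_, _, _, u, hu⟩ := h
  exact ⟨u⁻¹, by
    rw [hu, List.prod_singleton, mul_comm (u : D) a, mul_assoc, Units.mul_inv, mul_one]⟩

lemma two_le_length {l : List D} {a b : D} (ha : a ∈ l) (hb : b ∈ l) (hne : a ≠ b) :
    2 ≤ l.length := by
  match l with
  | [] => simp at ha
  | [x] =>
    simp at ha hb
    subst ha; subst hb
    exact absurd rfl hne
  | x :: y :: t => simp

/-- Cancellation of a common (associate) factor from two τ-factorizations. -/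
lemma cancel [DecidableEq D] {y c h : D} {l H : List D}
    (hl : TauFact τ l y) (hc : c ∈ l) (hH : TauFact τ H y) (hh : h ∈ H)
    (hch : Associated c h) (hl2 : 2 ≤ l.length) (hH2 : 2 ≤ H.length) :
    TauFact τ (H.erase h) ((H.erase h).prod) ∧
    TauFact τ (l.erase c) ((H.erase h).prod) := by
  have hHne : H.erase h ≠ [] := by
    have h1 := List.length_erase_of_mem hh
    intro he; rw [he] at h1; simp at h1; omega
  have hlne : l.erase c ≠ [] := by
    have h1 := List.length_erase_of_mem hc
    intro he; rw [he] at h1; simp at h1; omega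
  obtain ⟨_, hbl, hpl, u, hu⟩ := hl
  obtain ⟨_, hbH, hpH, w, hw⟩ := hH
  obtain ⟨v, hv⟩ := hch
  constructor
  · exact ⟨hHne, fun b hb => hbH b (List.mem_of_mem_erase hb),
      hpH.sublist (List.erase_sublist), 1, by simp⟩
  · refine ⟨hlne, fun b hb => hbl b (List.mem_of_mem_erase hb),
      hpl.sublist (List.erase_sublist), (w * v)⁻¹ * u, ?_⟩
    have hc0 : c ≠ 0 := (hbl c hc).1
    have hPl : l.prod = c * (l.erase c).prod := by
      rw [(List.perm_cons_erase hc).prod_eq, List.prod_cons]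
    have hPH : H.prod = h * (H.erase h).prod := by
      rw [(List.perm_cons_erase hh).prod_eq, List.prod_cons]
    have base : (u : D) * (c * (l.erase c).prod)
        = (w : D) * ((c * v) * (H.erase h).prod) := by
      rw [hv, ← hPl, ← hPH, ← hu, ← hw]
    have key : c * (((w * v : Dˣ) : D) * (H.erase h).prod)
        = c * ((u : D) * (l.erase c).prod) := by
      push_cast
      linear_combination -base
    have key2 := mul_left_cancel₀ hc0 key
    rw [(Units.eq_inv_mul_iff_mul_eq _).2 key2]
    push_cast
    ring

/-- Key lemma: if `H` is a τ-atomic factorization of `y` and `v` is a τ-irreducible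
member of any τ-factorization of `y`, then `v` is associated to a member of `H`
(assuming all irreducible divisor graphs are connected). -/
lemma keyE [DecidableEq D] (hconn : ∀ x : D, NzNonunit x → GConnected τ x) :
    ∀ (k : ℕ) (y : D) (H l : List D) (v : D), H.length = k →
      TauAtomicFact τ H y → TauFact τ l y → v ∈ l → TauIrred τ v →
      ∃ h ∈ H, Associated v h := by
  intro k
  induction k using Nat.strong_induction_on with
  | _ k IH =>
    intro y H l v hk hH hl hv hirr
    rcases Nat.lt_or_ge k 2 with hk2 | hk2
    · -- H has length 1
      have hk1 : H.length = 1 := by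
        have := List.length_pos_iff.mpr hH.1.1
        omega
      obtain ⟨h, rfl⟩ := List.length_eq_one_iff.mp hk1
      have hyh : Associated y h := assoc_of_single hH.1
      have hyirr : TauIrred τ y := (hH.2 h (by simp)).of_assoc hyh.symm
      obtain ⟨a, rfl⟩ := List.length_eq_one_iff.mp (hyirr.2 l hl)
      have hva : v = a := by simpa using hv
      subst hva
      have hyv : Associated y v := assoc_of_single hl
      exact ⟨h, by simp, hyv.symm.trans hyh⟩
    · have hy : NzNonunit y := hl.nzn
      have hvert : GVert τ y v := ⟨hirr, l, hl, hv⟩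
      obtain ⟨h₀, hh₀⟩ := List.exists_mem_of_ne_nil H hH.1.1
      have hvert0 : GVert τ y h₀ := ⟨hH.2 h₀ hh₀, H, hH.1, hh₀⟩
      have path := hconn y hy v h₀ hvert hvert0
      refine Relation.ReflTransGen.head_induction_on
        (motive := fun a _ => ∃ h ∈ H, Associated a h) path
        ⟨h₀, hh₀, Associated.refl h₀⟩ ?_
      intro a c hac _ Pc
      obtain ⟨h', hh', hch'⟩ := Pc
      rcases hac with hadj | hassoc
      · obtain ⟨hva', hvc', hnac, l'', hl'', ⟨a'', ha''m, ha''⟩, ⟨c'', hc''m, hc''⟩⟩ := hadj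
        have hc''h' : Associated c'' h' := hc''.symm.trans hch'
        have hne : a'' ≠ c'' := by
          rintro rfl
          exact hnac (ha''.trans hc''.symm)
        have hl''2 : 2 ≤ l''.length := two_le_length ha''m hc''m hne
        have hH2 : 2 ≤ H.length := by rw [hk]; exact hk2
        obtain ⟨fH, fl⟩ := cancel hl'' hc''m hH.1 hh' hc''h' hl''2 hH2
        have hHat : TauAtomicFact τ (H.erase h') ((H.erase h').prod) :=
          ⟨fH, fun b hb => hH.2 b (List.mem_of_mem_erase hb)⟩
        have hklt : (H.erase h').length < k := by
          rw [List.length_erase_of_mem hh', hk]; omega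
        have ha''irr : TauIrred τ a'' := hva'.1.of_assoc ha''
        have ha''mem : a'' ∈ l''.erase c'' := (List.mem_erase_of_ne hne).mpr ha''m
        obtain ⟨h'', hh''m, hh''⟩ :=
          IH _ hklt _ _ _ _ rfl hHat fl ha''mem ha''irr
        exact ⟨h'', List.mem_of_mem_erase hh''m, ha''.trans hh''⟩
      · exact ⟨h', hh', hassoc.trans hch'⟩

/-- Uniqueness of τ-atomic factorizations. -/
lemma uniq [DecidableEq D] (hconn : ∀ x : D, NzNonunit x → GConnected τ x) :
    ∀ (k : ℕ) (x : D) (l₁ l₂ : List D), l₁.length = k →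
      TauAtomicFact τ l₁ x → TauAtomicFact τ l₂ x →
      Multiset.Rel Associated (l₁ : Multiset D) (l₂ : Multiset D) := by
  intro k
  induction k using Nat.strong_induction_on with
  | _ k IH =>
    intro x l₁ l₂ hk h₁ h₂
    obtain ⟨b, hb⟩ := List.exists_mem_of_ne_nil l₂ h₂.1.1
    obtain ⟨a, ha, hba⟩ := keyE hconn k x l₁ l₂ b hk h₁ h₂.1 hb (h₂.2 b hb)
    rcases Nat.lt_or_ge k 2 with hk2 | hk2
    · have hk1 : l₁.length = 1 := by
        have := List.length_pos_iff.mpr h₁.1.1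
        omega
      obtain ⟨a₀, rfl⟩ := List.length_eq_one_iff.mp hk1
      have hxa : Associated x a₀ := assoc_of_single h₁.1
      have hxirr : TauIrred τ x := (h₁.2 a₀ (by simp)).of_assoc hxa.symm
      obtain ⟨b₀, rfl⟩ := List.length_eq_one_iff.mp (hxirr.2 l₂ h₂.1)
      have hxb : Associated x b₀ := assoc_of_single h₂.1
      have hab : Associated a₀ b₀ := hxa.symm.trans hxb
      simpa using Multiset.Rel.cons hab Multiset.Rel.zero
    · have hl₂2 : 2 ≤ l₂.length := by
        rcases Nat.lt_or_ge l₂.length 2 with h' | h'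
        · exfalso
          have hlen1 : l₂.length = 1 := by
            have := List.length_pos_iff.mpr h₂.1.1
            omega
          obtain ⟨b₀, rfl⟩ := List.length_eq_one_iff.mp hlen1
          have hxb : Associated x b₀ := assoc_of_single h₂.1
          have hxirr : TauIrred τ x := (h₂.2 b₀ (by simp)).of_assoc hxb.symm
          have := hxirr.2 l₁ h₁.1
          omega
        · exact h'
      have hH2 : 2 ≤ l₁.length := by rw [hk]; exact hk2
      obtain ⟨fH, fl⟩ := cancel h₂.1 hb h₁.1 ha hba hl₂2 hH2
      have h₁' : TauAtomicFact τ (l₁.erase a) ((l₁.erase a).prod) :=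
        ⟨fH, fun d hd => h₁.2 d (List.mem_of_mem_erase hd)⟩
      have h₂' : TauAtomicFact τ (l₂.erase b) ((l₁.erase a).prod) :=
        ⟨fl, fun d hd => h₂.2 d (List.mem_of_mem_erase hd)⟩
      have hlt : (l₁.erase a).length < k := by
        rw [List.length_erase_of_mem ha, hk]; omega
      have hrel := IH _ hlt _ _ _ rfl h₁' h₂'
      have e₁ : (↑l₁ : Multiset D) = a ::ₘ ↑(l₁.erase a) := by
        rw [Multiset.cons_coe]; exact Multiset.coe_eq_coe.mpr (List.perm_cons_erase ha)
      have e₂ : (↑l₂ : Multiset D) = b ::ₘ ↑(l₂.erase b) := by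
        rw [Multiset.cons_coe]; exact Multiset.coe_eq_coe.mpr (List.perm_cons_erase hb)
      rw [e₁, e₂]
      exact Multiset.Rel.cons hba.symm hrel

end Aux

theorem stmt8 {D : Type*} [CommRing D] [IsDomain D] (τ : D → D → Prop)
    (hsym : TauSymm τ) (hap : TauAssocPres τ) (hatomic : TauAtomic τ) :
    ((∀ x : D, NzNonunit x → GConnected τ x) → TauUFD τ) ∧
    ((∀ x : D, NzNonunit x → GConnected τ x) ↔
      (∀ x : D, NzNonunit x → GPseudoclique τ x)) := by
  classical
  have main : (∀ x : D, NzNonunit x → GConnected τ x) → TauUFD τ := by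
    intro hconn
    exact ⟨hatomic, fun x l₁ l₂ h₁ h₂ => uniq hconn l₁.length x l₁ l₂ rfl h₁ h₂⟩
  refine ⟨main, ?_, ?_⟩
  · intro hconn x hx a b hva hvb hnab
    obtain ⟨F, hF⟩ := hatomic x hx
    obtain ⟨la, hla, ham⟩ := hva.2
    obtain ⟨lb, hlb, hbm⟩ := hvb.2
    obtain ⟨a', ha'F, haa'⟩ := keyE hconn F.length x F la a rfl hF hla ham hva.1
    obtain ⟨b', hb'F, hbb'⟩ := keyE hconn F.length x F lb b rfl hF hlb hbm hvb.1
    exact ⟨hva, hvb, hnab, F, hF.1, ⟨a', ha'F, haa'⟩, ⟨b', hb'F, hbb'⟩⟩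
  · intro hpc x hx a b hva hvb
    by_cases hab : Associated a b
    · exact Relation.ReflTransGen.single (Or.inr hab)
    · exact Relation.ReflTransGen.single (Or.inl (hpc x hx a b hva hvb hab))
end

section
/- Let D be a τ-atomic integral domain with τ symmetric and associate preserving. Then G_τ(x) is connected for every x ∈ D^# if and only if the reduced graph G̅_τ(x) is connected for every x ∈ D^#, and this holds if and only if Diam(G_τ(x)) = 1 for every x ∈ D^# (with each G_τ(x) connected). -/
section StmtNineAux

variable {D : Type*} [CommRing D] [IsDomain D] {τ : D → D → Prop}

theorem nzn_of_assoc {a b : D} (h : NzNonunit a) (hab : Associated a b) :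
    NzNonunit b := by
  obtain ⟨u, rfl⟩ := hab
  exact ⟨mul_ne_zero h.1 (Units.ne_zero u), fun hu => h.2 (isUnit_of_mul_isUnit_left hu)⟩

theorem pairwise_assoc_middle (hsym : TauSymm τ) (hap : TauAssocPres τ)
    {s t : List D} {w w' : D} (hw : Associated w w')
    (h : (s ++ w :: t).Pairwise τ) : (s ++ w' :: t).Pairwise τ := by
  rw [List.pairwise_append, List.pairwise_cons] at h ⊢
  obtain ⟨hs, ⟨hwt, ht⟩, hst⟩ := h
  refine ⟨hs, ⟨fun b hb => hsym _ _ (hap b w w' (hsym _ _ (hwt b hb)) hw), ht⟩, ?_⟩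
  intro a ha b hb
  rcases List.mem_cons.mp hb with rfl | hb
  · exact hap a w b (hst a ha w List.mem_cons_self) hw
  · exact hst a ha b (List.mem_cons.mpr (Or.inr hb))

theorem prod_middle (s t : List D) (w : D) :
    (s ++ w :: t).prod = w * (s ++ t).prod := by
  rw [List.prod_append, List.prod_cons, List.prod_append]
  ring

theorem mem_of_mem_append_middle {s t : List D} {w b : D} (hb : b ∈ s ++ t) :
    b ∈ s ++ w :: t := by
  rcases List.mem_append.mp hb with h | h
  · exact List.mem_append.mpr (Or.inl h)
  · exact List.mem_append.mpr (Or.inr (List.mem_cons.mpr (Or.inr h)))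

theorem taufact_middle (hsym : TauSymm τ) (hap : TauAssocPres τ)
    {s t : List D} {w w' x : D} (hw : Associated w w')
    (h : TauFact τ (s ++ w :: t) x) : TauFact τ (s ++ w' :: t) x := by
  obtain ⟨hne, hmem, hpw, u, hu⟩ := h
  obtain ⟨v, hv⟩ := id hw
  refine ⟨by simp, ?_, pairwise_assoc_middle hsym hap hw hpw, u * v⁻¹, ?_⟩
  · intro b hb
    rcases List.mem_append.mp hb with hb | hb
    · exact hmem b (List.mem_append.mpr (Or.inl hb))
    · rcases List.mem_cons.mp hb with rfl | hb
      · exact nzn_of_assoc (hmem w (by simp)) hw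
      · exact hmem b (by simp [hb])
  · rw [prod_middle] at hu ⊢
    rw [hu, ← hv, Units.val_mul]
    have h1 : ((v⁻¹ : Dˣ) : D) * (v : D) = 1 := Units.inv_mul v
    linear_combination (-((u : D) * w * (s ++ t).prod)) * h1

theorem taufact_cancel (hsym : TauSymm τ) (hap : TauAssocPres τ)
    {s₁ t₁ s₂ t₂ : List D} {w w' x : D} (hw : Associated w w')
    (h₁ : TauFact τ (s₁ ++ w :: t₁) x) (h₂ : TauFact τ (s₂ ++ w' :: t₂) x)
    (hne₁ : s₁ ++ t₁ ≠ []) (hne₂ : s₂ ++ t₂ ≠ []) :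
    ∃ z : D, NzNonunit z ∧ TauFact τ (s₁ ++ t₁) z ∧ TauFact τ (s₂ ++ t₂) z := by
  have h₂' : TauFact τ (s₂ ++ w :: t₂) x := taufact_middle hsym hap hw.symm h₂
  obtain ⟨_, hmem₁, hpw₁, u₁, hu₁⟩ := h₁
  obtain ⟨_, hmem₂, hpw₂, u₂, hu₂⟩ := h₂'
  rw [prod_middle] at hu₁ hu₂
  have hw0 : w ≠ 0 := (hmem₁ w (by simp)).1
  have hzz : (u₁ : D) * (s₁ ++ t₁).prod = (u₂ : D) * (s₂ ++ t₂).prod := by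
    apply mul_left_cancel₀ hw0
    calc w * ((u₁ : D) * (s₁ ++ t₁).prod)
        = (u₁ : D) * (w * (s₁ ++ t₁).prod) := by ring
      _ = (u₂ : D) * (w * (s₂ ++ t₂).prod) := by rw [← hu₁, hu₂]
      _ = w * ((u₂ : D) * (s₂ ++ t₂).prod) := by ring
  have hmemA : ∀ b ∈ s₁ ++ t₁, NzNonunit b := fun b hb => hmem₁ b (mem_of_mem_append_middle hb)
  have hmemB : ∀ b ∈ s₂ ++ t₂, NzNonunit b := fun b hb => hmem₂ b (mem_of_mem_append_middle hb)
  have hsubA : (s₁ ++ t₁).Sublist (s₁ ++ w :: t₁) :=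
    List.Sublist.append_left (List.sublist_cons_self w t₁) s₁
  have hsubB : (s₂ ++ t₂).Sublist (s₂ ++ w :: t₂) :=
    List.Sublist.append_left (List.sublist_cons_self w t₂) s₂
  refine ⟨(u₁ : D) * (s₁ ++ t₁).prod, ⟨?_, ?_⟩,
    ⟨hne₁, hmemA, hpw₁.sublist hsubA, u₁, rfl⟩,
    ⟨hne₂, hmemB, hpw₂.sublist hsubB, u₂, hzz⟩⟩
  · refine mul_ne_zero (Units.ne_zero u₁) ?_
    intro h0
    have h0' := List.prod_eq_zero_iff.mp h0
    exact (hmemA 0 h0').1 rfl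
  · intro hu
    obtain ⟨b, r, hbr⟩ := List.exists_cons_of_ne_nil hne₁
    have hunit : IsUnit ((s₁ ++ t₁).prod) := by
      have := (isUnit_of_mul_isUnit_right hu)
      exact this
    rw [hbr, List.prod_cons] at hunit
    exact (hmemA b (by simp [hbr])).2 (isUnit_of_mul_isUnit_left hunit)

theorem keyV (hsym : TauSymm τ) (hap : TauAssocPres τ)
    (hconn : ∀ x : D, NzNonunit x → GConnected τ x) :
    ∀ N : ℕ, ∀ x : D, NzNonunit x → ∀ W : List D, TauAtomicFact τ W x → W.length ≤ N →
      ∀ a : D, GVert τ x a → ∃ w ∈ W, Associated a w := by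
  intro N
  induction N with
  | zero =>
    intro x hx W hW hlen a ha
    exact absurd (List.length_eq_zero_iff.mp (Nat.le_zero.mp hlen)) hW.1.1
  | succ N ih =>
    intro x hx W hW hlen a ha
    by_cases h1 : W.length = 1
    · obtain ⟨w, rfl⟩ := List.length_eq_one_iff.mp h1
      obtain ⟨hfW, hWirr⟩ := hW
      obtain ⟨-, -, -, u, hu⟩ := hfW
      rw [List.prod_singleton] at hu
      obtain ⟨hairr, l, hl, hal⟩ := ha
      obtain ⟨hne, hmem, hpw, u', hu'⟩ := hl
      have hlw : TauFact τ l w := by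
        refine ⟨hne, hmem, hpw, u⁻¹ * u', ?_⟩
        rw [Units.val_mul, mul_assoc, ← hu', hu, ← mul_assoc, Units.inv_mul, one_mul]
      have hlen1 := (hWirr w (by simp)).2 l hlw
      obtain ⟨b, rfl⟩ := List.length_eq_one_iff.mp hlen1
      have hab : a = b := List.mem_singleton.mp hal
      subst hab
      rw [List.prod_singleton] at hu'
      refine ⟨w, by simp, u⁻¹ * u', ?_⟩
      calc a * ((u⁻¹ * u' : Dˣ) : D) = ((u⁻¹ : Dˣ) : D) * ((u' : D) * a) := by
            rw [Units.val_mul]; ring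
        _ = ((u⁻¹ : Dˣ) : D) * ((u : D) * w) := by rw [← hu', ← hu]
        _ = w := by rw [← mul_assoc, Units.inv_mul, one_mul]
    · have h0 : W ≠ [] := hW.1.1
      have h2 : 2 ≤ W.length := by
        have := List.length_pos_iff.mpr h0
        omega
      obtain ⟨w₁, W', rfl⟩ := List.exists_cons_of_ne_nil h0
      simp only [List.length_cons] at h2 hlen
      by_contra hcon
      have hvert₁ : GVert τ x w₁ := ⟨hW.2 w₁ (by simp), ⟨w₁ :: W', hW.1, by simp⟩⟩
      have hchain := hconn x hx a w₁ ha hvert₁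
      have main : ∀ v : D, Relation.ReflTransGen (fun u v => GAdj τ x u v ∨ Associated u v) a v →
          ¬ ∃ w ∈ (w₁ :: W'), Associated v w := by
        intro v hv
        induction hv with
        | refl => exact hcon
        | @tail p q hp hpq ihp =>
          rintro ⟨w, hwW, hqw⟩
          rcases hpq with hadj | hassoc
          · by_cases hpW : ∃ w' ∈ (w₁ :: W'), Associated p w'
            · exact ihp hpW
            · obtain ⟨hpv, hqv, hpqne, l, hlf, ⟨p', hp'l, hpp'⟩, ⟨q', hq'l, hqq'⟩⟩ := hadj
              have hpq'' : p' ≠ q' := by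
                rintro rfl
                exact hpW ⟨w, hwW, hpp'.trans (hqq'.symm.trans hqw)⟩
              obtain ⟨s₁, t₁, hWdec⟩ := List.append_of_mem hwW
              obtain ⟨s₂, t₂, hldec⟩ := List.append_of_mem hq'l
              have hwq' : Associated w q' := hqw.symm.trans hqq'
              have hfW : TauFact τ (s₁ ++ w :: t₁) x := hWdec ▸ hW.1
              have hfl : TauFact τ (s₂ ++ q' :: t₂) x := hldec ▸ hlf
              have hlenW := congrArg List.length hWdec
              simp only [List.length_cons, List.length_append] at hlenW
              have hne₁ : s₁ ++ t₁ ≠ [] := by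
                intro hnil
                have := congrArg List.length hnil
                simp only [List.length_append, List.length_nil] at this
                omega
              have hp'mem : p' ∈ s₂ ++ t₂ := by
                have hmm := hldec ▸ hp'l
                rcases List.mem_append.mp hmm with h | h
                · exact List.mem_append.mpr (Or.inl h)
                · rcases List.mem_cons.mp h with h | h
                  · exact absurd h hpq''
                  · exact List.mem_append.mpr (Or.inr h)
              have hne₂ : s₂ ++ t₂ ≠ [] := List.ne_nil_of_mem hp'mem
              obtain ⟨z, hz, factA, factB⟩ := taufact_cancel hsym hap hwq' hfW hfl hne₁ hne₂
              have hatomA : TauAtomicFact τ (s₁ ++ t₁) z := by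
                refine ⟨factA, fun b hb => hW.2 b ?_⟩
                rw [hWdec]
                exact mem_of_mem_append_middle hb
              obtain ⟨s₃, t₃, hdec₃⟩ := List.append_of_mem hp'mem
              have factB' : TauFact τ (s₃ ++ p :: t₃) z :=
                taufact_middle hsym hap hpp'.symm (hdec₃ ▸ factB)
              have hpz : GVert τ z p := ⟨hpv.1, ⟨s₃ ++ p :: t₃, factB', by simp⟩⟩
              have hlenA : (s₁ ++ t₁).length ≤ N := by
                simp only [List.length_append]
                omega
              obtain ⟨w'', hw''A, hw''⟩ := ih z hz (s₁ ++ t₁) hatomA hlenA p hpz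
              refine hpW ⟨w'', ?_, hw''⟩
              rw [hWdec]
              exact mem_of_mem_append_middle hw''A
          · exact ihp ⟨w, hwW, hassoc.trans hqw⟩
      exact main w₁ hchain ⟨w₁, by simp, Associated.refl w₁⟩

theorem diam_le_one (hsym : TauSymm τ) (hap : TauAssocPres τ) (hatomic : TauAtomic τ)
    (hconn : ∀ x : D, NzNonunit x → GConnected τ x)
    (x : D) (hx : NzNonunit x) : GDiamLeOne τ x := by
  intro a b ha hb
  by_cases hab : Associated a b
  · exact Or.inl hab
  · right
    obtain ⟨W, hW⟩ := hatomic x hx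
    obtain ⟨wa, hwa, hawa⟩ := keyV hsym hap hconn W.length x hx W hW le_rfl a ha
    obtain ⟨wb, hwb, hbwb⟩ := keyV hsym hap hconn W.length x hx W hW le_rfl b hb
    exact ⟨ha, hb, hab, W, hW.1, ⟨wa, hwa, hawa⟩, ⟨wb, hwb, hbwb⟩⟩

end StmtNineAux

theorem stmt9 {D : Type*} [CommRing D] [IsDomain D] (τ : D → D → Prop)
    (hsym : TauSymm τ) (hap : TauAssocPres τ) (hatomic : TauAtomic τ) :
    ((∀ x : D, NzNonunit x → GConnected τ x) ↔
      (∀ x : D, NzNonunit x → GBarConnected τ x)) ∧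
    ((∀ x : D, NzNonunit x → GConnected τ x) ↔
      (∀ x : D, NzNonunit x → GConnected τ x ∧ GDiamLeOne τ x)) := by
  refine ⟨Iff.rfl, ?_, ?_⟩
  · intro h x hx
    exact ⟨h x hx, diam_le_one hsym hap hatomic h x hx⟩
  · intro h x hx
    exact (h x hx).1
end
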